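/- For every integer n ≥ 6, the three-element vertex set {p_2, p_{⌊n/2⌋+1}, p_n} is a resolving set of the heptagonal circular ladder Γ_n; i.e., any two distinct vertices of Γ_n have different distance vectors to (p_2, p_{⌊n/2⌋+1}, p_n). -/
import Mathlib


/-- Vertices of the heptagonal circular ladder: four families indexed by `ZMod n`. -/
inductive HCLVertex (n : ℕ) : Type
  | p (t : ZMod n) : HCLVertex n
  | q (t : ZMod n) : HCLVertex n
  | r (t : ZMod n) : HCLVertex n
  | s (t : ZMod n) : HCLVertex n
deriving DecidableEq

/-- Base relation giving the edges of the heptagonal circular ladder `Γ_n`: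
`p_t p_{t+1}`, `p_t q_t`, `q_t r_t`, `r_t s_t`, `s_t r_{t+1}` (indices mod `n`). -/
def gammaRel (n : ℕ) : HCLVertex n → HCLVertex n → Prop
  | .p t, .p u => u = t + 1
  | .p t, .q u => u = t
  | .q t, .r u => u = t
  | .r t, .s u => u = t
  | .s t, .r u => u = t + 1
  | _, _ => False

/-- The heptagonal circular ladder `Γ_n`. -/
def Gamma (n : ℕ) : SimpleGraph (HCLVertex n) :=
  SimpleGraph.fromRel (gammaRel n)

/-- The extra edges `r_t q_{t+1}` added to `Γ_n` to obtain `Δ_n`. -/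
def deltaRel (n : ℕ) : HCLVertex n → HCLVertex n → Prop
  | .r t, .q u => u = t + 1
  | _, _ => False

/-- The convex polytope graph `Δ_n`, obtained from `Γ_n` by adding the edges `r_t q_{t+1}`. -/
def Delta (n : ℕ) : SimpleGraph (HCLVertex n) :=
  SimpleGraph.fromRel (fun v w => gammaRel n v w ∨ deltaRel n v w)

/-- `W` is a resolving set of `G`: every pair of distinct vertices is distinguished by
its distance to some vertex of `W`. -/
def IsResolving {V : Type*} (G : SimpleGraph V) (W : Set V) : Prop :=
  ∀ u v : V, u ≠ v → ∃ w ∈ W, G.dist w u ≠ G.dist w v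

/-- Distance from a vertex `x` to an edge `e = yz`: `min (d x y) (d x z)`. -/
noncomputable def edgeDist {V : Type*} (G : SimpleGraph V) (x : V) (e : Sym2 V) : ℕ :=
  Sym2.lift ⟨fun y z => min (G.dist x y) (G.dist x z), fun y z => min_comm _ _⟩ e

/-- `W` is an edge resolving set of `G`: every pair of distinct edges is distinguished by
its distance to some vertex of `W`. -/
def IsEdgeResolving {V : Type*} (G : SimpleGraph V) (W : Set V) : Prop :=
  ∀ e ∈ G.edgeSet, ∀ f ∈ G.edgeSet, e ≠ f → ∃ w ∈ W, edgeDist G w e ≠ edgeDist G w f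

namespace GammaResolve

open SimpleGraph

variable {n : ℕ}

/-- circular "norm" of a residue -/
def cz (n : ℕ) (a : ZMod n) : ℕ := min a.val (n - a.val)

/-- candidate distance from `p w` -/
def D (n : ℕ) (w : ZMod n) : HCLVertex n → ℕ
  | .p t => cz n (t - w)
  | .q t => cz n (t - w) + 1
  | .r t => cz n (t - w) + 2
  | .s t => min (cz n (t - w)) (cz n (t + 1 - w)) + 3

lemma val_add_nat [NeZero n] (a : ZMod n) (c : ℕ) :
    (a + (c : ZMod n)).val = (a.val + c) % n := by
  rw [ZMod.val_add, ZMod.val_natCast, Nat.add_mod_mod]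

lemma mod_lt2 {x : ℕ} (hn : 0 < n) (h : x < n + n) :
    (x % n = x ∧ x < n) ∨ (x % n = x - n ∧ n ≤ x) := by
  rcases Nat.lt_or_ge x n with h1 | h1
  · exact Or.inl ⟨Nat.mod_eq_of_lt h1, h1⟩
  · refine Or.inr ⟨?_, h1⟩
    rw [Nat.mod_eq_sub_mod h1]
    exact Nat.mod_eq_of_lt (by omega)

lemma natCast_pred [NeZero n] : ((n - 1 : ℕ) : ZMod n) = -1 := by
  have hn : 0 < n := Nat.pos_of_ne_zero (NeZero.ne n)
  have h : ((n - 1 : ℕ) : ZMod n) + 1 = 0 := by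
    have e : (n - 1) + 1 = n := by omega
    calc ((n - 1 : ℕ) : ZMod n) + 1 = ((n - 1 + 1 : ℕ) : ZMod n) := by push_cast; ring
      _ = ((n : ℕ) : ZMod n) := by rw [e]
      _ = 0 := ZMod.natCast_self n
  exact eq_neg_of_add_eq_zero_left h

lemma val_add_one [NeZero n] (a : ZMod n) : (a + 1).val = (a.val + 1) % n := by
  have : a + 1 = a + ((1 : ℕ) : ZMod n) := by norm_num
  rw [this, val_add_nat]

lemma val_sub_one [NeZero n] (a : ZMod n) : (a - 1).val = (a.val + (n - 1)) % n := by
  have : a - 1 = a + ((n - 1 : ℕ) : ZMod n) := by rw [natCast_pred]; ring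
  rw [this, val_add_nat]

lemma cz_lip [NeZero n] (a : ZMod n) : cz n (a + 1) ≤ cz n a + 1 ∧ cz n a ≤ cz n (a + 1) + 1 := by
  have hb := ZMod.val_lt a
  have hn : 0 < n := Nat.pos_of_ne_zero (NeZero.ne n)
  have hv := val_add_one a
  rcases mod_lt2 hn (x := a.val + 1) (by omega) with ⟨e, f⟩ | ⟨e, f⟩ <;>
    simp only [cz, hv, e] <;> omega

lemma cz_eq_zero [NeZero n] {a : ZMod n} : cz n a = 0 ↔ a = 0 := by
  have hb := ZMod.val_lt a
  rw [← ZMod.val_eq_zero]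
  unfold cz
  omega

lemma cz_descent [NeZero n] (a : ZMod n) (ha : a ≠ 0) :
    cz n (a - 1) + 1 = cz n a ∨ cz n (a + 1) + 1 = cz n a := by
  have hb := ZMod.val_lt a
  have hn : 0 < n := Nat.pos_of_ne_zero (NeZero.ne n)
  have h0 : a.val ≠ 0 := fun h => ha (ZMod.val_eq_zero a |>.mp h)
  have hv1 := val_add_one a
  have hv2 := val_sub_one a
  rcases mod_lt2 hn (x := a.val + 1) (by omega) with ⟨e1, f1⟩ | ⟨e1, f1⟩ <;>
    rcases mod_lt2 hn (x := a.val + (n - 1)) (by omega) with ⟨e2, f2⟩ | ⟨e2, f2⟩ <;>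
      simp only [cz, hv1, hv2, e1, e2] <;> omega

lemma one_ne_zero' [NeZero n] (hn : 2 ≤ n) : (1 : ZMod n) ≠ 0 := by
  intro h
  have h1 : ((1 : ℕ) : ZMod n).val = 1 := ZMod.val_natCast_of_lt (by omega)
  rw [Nat.cast_one, h, ZMod.val_zero] at h1
  omega

lemma adj_pp [NeZero n] (hn : 2 ≤ n) (t : ZMod n) :
    (Gamma n).Adj (.p t) (.p (t + 1)) := by
  rw [Gamma, SimpleGraph.fromRel_adj]
  refine ⟨fun h => ?_, Or.inl rfl⟩
  have : t = t + 1 := by injection h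
  exact one_ne_zero' hn (by linear_combination -this)

lemma adj_pq (t : ZMod n) : (Gamma n).Adj (.p t) (.q t) := by
  rw [Gamma, SimpleGraph.fromRel_adj]
  exact ⟨fun h => by simp at h, Or.inl rfl⟩

lemma adj_qr (t : ZMod n) : (Gamma n).Adj (.q t) (.r t) := by
  rw [Gamma, SimpleGraph.fromRel_adj]
  exact ⟨fun h => by simp at h, Or.inl rfl⟩

lemma adj_rs (t : ZMod n) : (Gamma n).Adj (.r t) (.s t) := by
  rw [Gamma, SimpleGraph.fromRel_adj]
  exact ⟨fun h => by simp at h, Or.inl rfl⟩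

lemma adj_sr (t : ZMod n) : (Gamma n).Adj (.s t) (.r (t + 1)) := by
  rw [Gamma, SimpleGraph.fromRel_adj]
  exact ⟨fun h => by simp at h, Or.inl rfl⟩

lemma D_le_adj [NeZero n] (w : ZMod n) {u v : HCLVertex n}
    (h : (Gamma n).Adj u v) : D n w v ≤ D n w u + 1 := by
  rw [Gamma, SimpleGraph.fromRel_adj] at h
  obtain ⟨hne, hrel⟩ := h
  cases u with
  | p t =>
    cases v with
    | p t' =>
      simp only [gammaRel] at hrel
      rcases hrel with h' | h' <;> subst h'
      · have e : t + 1 - w = (t - w) + 1 := by ring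
        have := cz_lip (t - w)
        simp only [D, e]; omega
      · have e : t' + 1 - w = (t' - w) + 1 := by ring
        have := cz_lip (t' - w)
        simp only [D, e]; omega
    | q t' =>
      simp only [gammaRel, or_false] at hrel
      subst hrel; simp only [D]; omega
    | r t' => simp only [gammaRel, or_self] at hrel
    | s t' => simp only [gammaRel, or_self] at hrel
  | q t =>
    cases v with
    | p t' =>
      simp only [gammaRel, false_or] at hrel
      subst hrel; simp only [D]; omega
    | q t' => simp only [gammaRel, or_self] at hrel
    | r t' =>
      simp only [gammaRel, or_false] at hrel
      subst hrel; simp only [D]; omega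
    | s t' => simp only [gammaRel, or_self] at hrel
  | r t =>
    cases v with
    | p t' => simp only [gammaRel, or_self] at hrel
    | q t' =>
      simp only [gammaRel, false_or] at hrel
      subst hrel; simp only [D]; omega
    | r t' => simp only [gammaRel, or_self] at hrel
    | s t' =>
      simp only [gammaRel] at hrel
      rcases hrel with h' | h'
      · subst h'
        simp only [D]; omega
      · subst h'
        have e : t' + 1 - w = (t' - w) + 1 := by ring
        have := cz_lip (t' - w)
        simp only [D, e]; omega
  | s t =>
    cases v with
    | p t' => simp only [gammaRel, or_self] at hrel
    | q t' => simp only [gammaRel, or_self] at hrel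
    | r t' =>
      simp only [gammaRel] at hrel
      rcases hrel with h' | h'
      · subst h'
        have e : t + 1 - w = (t - w) + 1 := by ring
        have := cz_lip (t - w)
        simp only [D, e]; omega
      · subst h'
        have e : t + 1 - w = (t - w) + 1 := by ring
        have := cz_lip (t - w)
        simp only [D, e]; omega
    | s t' => simp only [gammaRel, or_self] at hrel

lemma D_le_walk [NeZero n] (w : ZMod n) {u v : HCLVertex n}
    (pa : (Gamma n).Walk u v) : D n w v ≤ D n w u + pa.length := by
  induction pa with
  | nil => simp
  | cons h p ih =>
    have := D_le_adj w h
    simp only [SimpleGraph.Walk.length_cons]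
    omega

lemma exists_walk [NeZero n] (hn : 2 ≤ n) (w : ZMod n) :
    ∀ (k : ℕ) (v : HCLVertex n), D n w v = k →
      ∃ pa : (Gamma n).Walk (.p w) v, pa.length = k := by
  intro k
  induction k with
  | zero =>
    intro v hv
    cases v with
    | p t =>
      simp only [D] at hv
      have h0 : t - w = 0 := cz_eq_zero.mp hv
      have ht : t = w := by linear_combination h0
      subst ht
      exact ⟨SimpleGraph.Walk.nil, rfl⟩
    | q t => simp [D] at hv
    | r t => simp [D] at hv
    | s t => simp [D] at hv
  | succ k ih =>
    intro v hv
    cases v with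
    | p t =>
      simp only [D] at hv
      have ht : t - w ≠ 0 := by
        intro h0
        rw [cz_eq_zero.mpr h0] at hv
        omega
      rcases cz_descent (t - w) ht with hd | hd
      · have e : t - 1 - w = (t - w) - 1 := by ring
        obtain ⟨pa, hpa⟩ := ih (.p (t - 1)) (by simp only [D, e]; omega)
        have hadj : (Gamma n).Adj (.p (t - 1)) (.p t) := by
          have := adj_pp hn (t - 1)
          simpa using this
        exact ⟨pa.concat hadj, by rw [SimpleGraph.Walk.length_concat, hpa]⟩
      · have e : t + 1 - w = (t - w) + 1 := by ring
        obtain ⟨pa, hpa⟩ := ih (.p (t + 1)) (by simp only [D, e]; omega)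
        exact ⟨pa.concat (adj_pp hn t).symm, by rw [SimpleGraph.Walk.length_concat, hpa]⟩
    | q t =>
      simp only [D] at hv
      obtain ⟨pa, hpa⟩ := ih (.p t) (by simp only [D]; omega)
      exact ⟨pa.concat (adj_pq t), by rw [SimpleGraph.Walk.length_concat, hpa]⟩
    | r t =>
      simp only [D] at hv
      obtain ⟨pa, hpa⟩ := ih (.q t) (by simp only [D]; omega)
      exact ⟨pa.concat (adj_qr t), by rw [SimpleGraph.Walk.length_concat, hpa]⟩
    | s t =>
      simp only [D] at hv
      rcases le_total (cz n (t - w)) (cz n (t + 1 - w)) with hle | hle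
      · obtain ⟨pa, hpa⟩ := ih (.r t) (by simp only [D]; omega)
        exact ⟨pa.concat (adj_rs t), by rw [SimpleGraph.Walk.length_concat, hpa]⟩
      · obtain ⟨pa, hpa⟩ := ih (.r (t + 1)) (by simp only [D]; omega)
        exact ⟨pa.concat (adj_sr t).symm, by rw [SimpleGraph.Walk.length_concat, hpa]⟩

lemma dist_eq [NeZero n] (hn : 2 ≤ n) (w : ZMod n) (v : HCLVertex n) :
    (Gamma n).dist (.p w) v = D n w v := by
  obtain ⟨pa, hpa⟩ := exists_walk hn w (D n w v) v rfl
  have h1 : (Gamma n).dist (.p w) v ≤ D n w v := hpa ▸ SimpleGraph.dist_le pa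
  obtain ⟨qa, hqa⟩ := SimpleGraph.Reachable.exists_walk_length_eq_dist ⟨pa⟩
  have h2 := D_le_walk w qa
  have h0 : D n w (.p w) = 0 := by
    simp only [D, sub_self]
    exact cz_eq_zero.mpr rfl
  omega

lemma cz_char [NeZero n] (w : ℕ) (hw : w ≤ n) (t : ZMod n) :
    (w ≤ t.val ∧ cz n (t - (w : ZMod n)) = min (t.val - w) (n - (t.val - w))) ∨
    (t.val < w ∧ cz n (t - (w : ZMod n)) = min (t.val + n - w) (n - (t.val + n - w))) := by
  have hb := ZMod.val_lt t
  have hn : 0 < n := Nat.pos_of_ne_zero (NeZero.ne n)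
  have hsub : t - (w : ZMod n) = t + ((n - w : ℕ) : ZMod n) := by
    have h0 : ((w : ℕ) : ZMod n) + ((n - w : ℕ) : ZMod n) = 0 := by
      rw [← Nat.cast_add]
      have e : w + (n - w) = n := by omega
      rw [e, ZMod.natCast_self]
    have h1 : ((n - w : ℕ) : ZMod n) = -(w : ZMod n) := eq_neg_of_add_eq_zero_right h0
    rw [h1]; ring
  have hv := val_add_nat t (n - w)
  rw [hsub]
  rcases mod_lt2 hn (x := t.val + (n - w)) (by omega) with ⟨e, f⟩ | ⟨e, f⟩ <;>
    simp only [cz, hv, e] <;> omega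

lemma val_succ [NeZero n] (t : ZMod n) :
    ((t + 1).val = t.val + 1 ∧ t.val + 1 < n) ∨ ((t + 1).val = 0 ∧ t.val = n - 1) := by
  have hb := ZMod.val_lt t
  have hn : 0 < n := Nat.pos_of_ne_zero (NeZero.ne n)
  have hv := val_add_one t
  rcases mod_lt2 hn (x := t.val + 1) (by omega) with ⟨e, f⟩ | ⟨e, f⟩ <;>
    rw [hv, e] <;> omega


def ez (n : ℕ) (a : ZMod n) : ℕ := if 2 * a.val < n then a.val else n - a.val - 1

lemma cz_min_succ [NeZero n] (w t : ZMod n) :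
    min (cz n (t - w)) (cz n (t + 1 - w)) = ez n (t - w) := by
  have e : t + 1 - w = (t - w) + 1 := by ring
  rw [e]
  generalize t - w = a
  have hb := ZMod.val_lt a
  have hn : 0 < n := Nat.pos_of_ne_zero (NeZero.ne n)
  have hv := val_add_one a
  rcases mod_lt2 hn (x := a.val + 1) (by omega) with ⟨e1, f1⟩ | ⟨e1, f1⟩ <;>
    simp only [cz, ez, hv, e1] <;> split_ifs <;> omega

lemma ez_char [NeZero n] (w : ℕ) (hw : w ≤ n) (t : ZMod n) :
    (w ≤ t.val ∧ (2 * (t.val - w) < n ∧ ez n (t - (w : ZMod n)) = t.val - w ∨ n ≤ 2 * (t.val - w) ∧ ez n (t - (w : ZMod n)) = n - (t.val - w) - 1)) ∨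
    (t.val < w ∧ (2 * (t.val + n - w) < n ∧ ez n (t - (w : ZMod n)) = t.val + n - w ∨ n ≤ 2 * (t.val + n - w) ∧ ez n (t - (w : ZMod n)) = n - (t.val + n - w) - 1)) := by
  have hb := ZMod.val_lt t
  have hn : 0 < n := Nat.pos_of_ne_zero (NeZero.ne n)
  have hsub : t - (w : ZMod n) = t + ((n - w : ℕ) : ZMod n) := by
    have h0 : ((w : ℕ) : ZMod n) + ((n - w : ℕ) : ZMod n) = 0 := by
      rw [← Nat.cast_add]
      have e : w + (n - w) = n := by omega
      rw [e, ZMod.natCast_self]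
    have h1 : ((n - w : ℕ) : ZMod n) = -(w : ZMod n) := eq_neg_of_add_eq_zero_right h0
    rw [h1]; ring
  rw [hsub]
  have hv := val_add_nat t (n - w)
  rcases mod_lt2 hn (x := t.val + (n - w)) (by omega) with ⟨e, f⟩ | ⟨e, f⟩ <;>
    simp only [ez, hv, e] <;> split_ifs <;> omega


set_option maxHeartbeats 1600000 in
lemma lemCC0 (n k k' cA cA' cC cC' : ℕ) (hn : 6 ≤ n)
    (bk : k < n) (bk' : k' < n) (hkk : k ≠ k')
    (hA : ((2 ≤ k ∧ cA = min (k - 2) (n - (k - 2))) ∨ (k < 2 ∧ cA = min (k + n - 2) (n - (k + n - 2)))))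
    (hA' : ((2 ≤ k' ∧ cA' = min (k' - 2) (n - (k' - 2))) ∨ (k' < 2 ∧ cA' = min (k' + n - 2) (n - (k' + n - 2)))))
    (hC : ((n ≤ k ∧ cC = min (k - n) (n - (k - n))) ∨ (k < n ∧ cC = min (k + n - n) (n - (k + n - n)))))
    (hC' : ((n ≤ k' ∧ cC' = min (k' - n) (n - (k' - n))) ∨ (k' < n ∧ cC' = min (k' + n - n) (n - (k' + n - n)))))
    (eA : cA = cA') (eC : cC = cC') : False := by
  omega

set_option maxHeartbeats 1600000 in
lemma lemEE0 (n k k' cA cA' cC cC' : ℕ) (hn : 6 ≤ n)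
    (bk : k < n) (bk' : k' < n) (hkk : k ≠ k')
    (hA : ((2 ≤ k ∧ (2 * (k - 2) < n ∧ cA = k - 2 ∨ n ≤ 2 * (k - 2) ∧ cA = n - (k - 2) - 1)) ∨ (k < 2 ∧ (2 * (k + n - 2) < n ∧ cA = k + n - 2 ∨ n ≤ 2 * (k + n - 2) ∧ cA = n - (k + n - 2) - 1))))
    (hA' : ((2 ≤ k' ∧ (2 * (k' - 2) < n ∧ cA' = k' - 2 ∨ n ≤ 2 * (k' - 2) ∧ cA' = n - (k' - 2) - 1)) ∨ (k' < 2 ∧ (2 * (k' + n - 2) < n ∧ cA' = k' + n - 2 ∨ n ≤ 2 * (k' + n - 2) ∧ cA' = n - (k' + n - 2) - 1))))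
    (hC : ((n ≤ k ∧ (2 * (k - n) < n ∧ cC = k - n ∨ n ≤ 2 * (k - n) ∧ cC = n - (k - n) - 1)) ∨ (k < n ∧ (2 * (k + n - n) < n ∧ cC = k + n - n ∨ n ≤ 2 * (k + n - n) ∧ cC = n - (k + n - n) - 1))))
    (hC' : ((n ≤ k' ∧ (2 * (k' - n) < n ∧ cC' = k' - n ∨ n ≤ 2 * (k' - n) ∧ cC' = n - (k' - n) - 1)) ∨ (k' < n ∧ (2 * (k' + n - n) < n ∧ cC' = k' + n - n ∨ n ≤ 2 * (k' + n - n) ∧ cC' = n - (k' + n - n) - 1))))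
    (eA : cA = cA') (eC : cC = cC') : False := by
  omega

set_option maxHeartbeats 1600000 in
lemma lemCC1 (n k k' cA cA' cB cB' cC cC' : ℕ) (hn : 6 ≤ n)
    (bk : k < n) (bk' : k' < n)
    (hA : ((2 ≤ k ∧ cA = min (k - 2) (n - (k - 2))) ∨ (k < 2 ∧ cA = min (k + n - 2) (n - (k + n - 2)))))
    (hA' : ((2 ≤ k' ∧ cA' = min (k' - 2) (n - (k' - 2))) ∨ (k' < 2 ∧ cA' = min (k' + n - 2) (n - (k' + n - 2)))))
    (hB : (((n / 2 + 1) ≤ k ∧ cB = min (k - (n / 2 + 1)) (n - (k - (n / 2 + 1)))) ∨ (k < (n / 2 + 1) ∧ cB = min (k + n - (n / 2 + 1)) (n - (k + n - (n / 2 + 1))))))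
    (hB' : (((n / 2 + 1) ≤ k' ∧ cB' = min (k' - (n / 2 + 1)) (n - (k' - (n / 2 + 1)))) ∨ (k' < (n / 2 + 1) ∧ cB' = min (k' + n - (n / 2 + 1)) (n - (k' + n - (n / 2 + 1))))))
    (hC : ((n ≤ k ∧ cC = min (k - n) (n - (k - n))) ∨ (k < n ∧ cC = min (k + n - n) (n - (k + n - n)))))
    (hC' : ((n ≤ k' ∧ cC' = min (k' - n) (n - (k' - n))) ∨ (k' < n ∧ cC' = min (k' + n - n) (n - (k' + n - n)))))
    (eA : cA = cA' + 1) (eB : cB = cB' + 1) (eC : cC = cC' + 1) : False := by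
  omega

set_option maxHeartbeats 1600000 in
lemma lemCC2 (n k k' cA cA' cB cB' cC cC' : ℕ) (hn : 6 ≤ n)
    (bk : k < n) (bk' : k' < n)
    (hA : ((2 ≤ k ∧ cA = min (k - 2) (n - (k - 2))) ∨ (k < 2 ∧ cA = min (k + n - 2) (n - (k + n - 2)))))
    (hA' : ((2 ≤ k' ∧ cA' = min (k' - 2) (n - (k' - 2))) ∨ (k' < 2 ∧ cA' = min (k' + n - 2) (n - (k' + n - 2)))))
    (hB : (((n / 2 + 1) ≤ k ∧ cB = min (k - (n / 2 + 1)) (n - (k - (n / 2 + 1)))) ∨ (k < (n / 2 + 1) ∧ cB = min (k + n - (n / 2 + 1)) (n - (k + n - (n / 2 + 1))))))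
    (hB' : (((n / 2 + 1) ≤ k' ∧ cB' = min (k' - (n / 2 + 1)) (n - (k' - (n / 2 + 1)))) ∨ (k' < (n / 2 + 1) ∧ cB' = min (k' + n - (n / 2 + 1)) (n - (k' + n - (n / 2 + 1))))))
    (hC : ((n ≤ k ∧ cC = min (k - n) (n - (k - n))) ∨ (k < n ∧ cC = min (k + n - n) (n - (k + n - n)))))
    (hC' : ((n ≤ k' ∧ cC' = min (k' - n) (n - (k' - n))) ∨ (k' < n ∧ cC' = min (k' + n - n) (n - (k' + n - n)))))
    (eA : cA = cA' + 2) (eB : cB = cB' + 2) (eC : cC = cC' + 2) : False := by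
  omega

set_option maxHeartbeats 1600000 in
lemma lemCE1 (n k k' cA cA' cB cB' cC cC' : ℕ) (hn : 6 ≤ n)
    (bk : k < n) (bk' : k' < n)
    (hA : ((2 ≤ k ∧ cA = min (k - 2) (n - (k - 2))) ∨ (k < 2 ∧ cA = min (k + n - 2) (n - (k + n - 2)))))
    (hA' : ((2 ≤ k' ∧ (2 * (k' - 2) < n ∧ cA' = k' - 2 ∨ n ≤ 2 * (k' - 2) ∧ cA' = n - (k' - 2) - 1)) ∨ (k' < 2 ∧ (2 * (k' + n - 2) < n ∧ cA' = k' + n - 2 ∨ n ≤ 2 * (k' + n - 2) ∧ cA' = n - (k' + n - 2) - 1))))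
    (hB : (((n / 2 + 1) ≤ k ∧ cB = min (k - (n / 2 + 1)) (n - (k - (n / 2 + 1)))) ∨ (k < (n / 2 + 1) ∧ cB = min (k + n - (n / 2 + 1)) (n - (k + n - (n / 2 + 1))))))
    (hB' : (((n / 2 + 1) ≤ k' ∧ (2 * (k' - (n / 2 + 1)) < n ∧ cB' = k' - (n / 2 + 1) ∨ n ≤ 2 * (k' - (n / 2 + 1)) ∧ cB' = n - (k' - (n / 2 + 1)) - 1)) ∨ (k' < (n / 2 + 1) ∧ (2 * (k' + n - (n / 2 + 1)) < n ∧ cB' = k' + n - (n / 2 + 1) ∨ n ≤ 2 * (k' + n - (n / 2 + 1)) ∧ cB' = n - (k' + n - (n / 2 + 1)) - 1))))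
    (hC : ((n ≤ k ∧ cC = min (k - n) (n - (k - n))) ∨ (k < n ∧ cC = min (k + n - n) (n - (k + n - n)))))
    (hC' : ((n ≤ k' ∧ (2 * (k' - n) < n ∧ cC' = k' - n ∨ n ≤ 2 * (k' - n) ∧ cC' = n - (k' - n) - 1)) ∨ (k' < n ∧ (2 * (k' + n - n) < n ∧ cC' = k' + n - n ∨ n ≤ 2 * (k' + n - n) ∧ cC' = n - (k' + n - n) - 1))))
    (eA : cA = cA' + 1) (eB : cB = cB' + 1) (eC : cC = cC' + 1) : False := by
  omega

set_option maxHeartbeats 1600000 in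
lemma lemCE2 (n k k' cA cA' cB cB' cC cC' : ℕ) (hn : 6 ≤ n)
    (bk : k < n) (bk' : k' < n)
    (hA : ((2 ≤ k ∧ cA = min (k - 2) (n - (k - 2))) ∨ (k < 2 ∧ cA = min (k + n - 2) (n - (k + n - 2)))))
    (hA' : ((2 ≤ k' ∧ (2 * (k' - 2) < n ∧ cA' = k' - 2 ∨ n ≤ 2 * (k' - 2) ∧ cA' = n - (k' - 2) - 1)) ∨ (k' < 2 ∧ (2 * (k' + n - 2) < n ∧ cA' = k' + n - 2 ∨ n ≤ 2 * (k' + n - 2) ∧ cA' = n - (k' + n - 2) - 1))))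
    (hB : (((n / 2 + 1) ≤ k ∧ cB = min (k - (n / 2 + 1)) (n - (k - (n / 2 + 1)))) ∨ (k < (n / 2 + 1) ∧ cB = min (k + n - (n / 2 + 1)) (n - (k + n - (n / 2 + 1))))))
    (hB' : (((n / 2 + 1) ≤ k' ∧ (2 * (k' - (n / 2 + 1)) < n ∧ cB' = k' - (n / 2 + 1) ∨ n ≤ 2 * (k' - (n / 2 + 1)) ∧ cB' = n - (k' - (n / 2 + 1)) - 1)) ∨ (k' < (n / 2 + 1) ∧ (2 * (k' + n - (n / 2 + 1)) < n ∧ cB' = k' + n - (n / 2 + 1) ∨ n ≤ 2 * (k' + n - (n / 2 + 1)) ∧ cB' = n - (k' + n - (n / 2 + 1)) - 1))))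
    (hC : ((n ≤ k ∧ cC = min (k - n) (n - (k - n))) ∨ (k < n ∧ cC = min (k + n - n) (n - (k + n - n)))))
    (hC' : ((n ≤ k' ∧ (2 * (k' - n) < n ∧ cC' = k' - n ∨ n ≤ 2 * (k' - n) ∧ cC' = n - (k' - n) - 1)) ∨ (k' < n ∧ (2 * (k' + n - n) < n ∧ cC' = k' + n - n ∨ n ≤ 2 * (k' + n - n) ∧ cC' = n - (k' + n - n) - 1))))
    (eA : cA = cA' + 2) (eB : cB = cB' + 2) (eC : cC = cC' + 2) : False := by
  omega

set_option maxHeartbeats 1600000 in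
lemma lemCE3 (n k k' cA cA' cB cB' cC cC' : ℕ) (hn : 6 ≤ n)
    (bk : k < n) (bk' : k' < n)
    (hA : ((2 ≤ k ∧ cA = min (k - 2) (n - (k - 2))) ∨ (k < 2 ∧ cA = min (k + n - 2) (n - (k + n - 2)))))
    (hA' : ((2 ≤ k' ∧ (2 * (k' - 2) < n ∧ cA' = k' - 2 ∨ n ≤ 2 * (k' - 2) ∧ cA' = n - (k' - 2) - 1)) ∨ (k' < 2 ∧ (2 * (k' + n - 2) < n ∧ cA' = k' + n - 2 ∨ n ≤ 2 * (k' + n - 2) ∧ cA' = n - (k' + n - 2) - 1))))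
    (hB : (((n / 2 + 1) ≤ k ∧ cB = min (k - (n / 2 + 1)) (n - (k - (n / 2 + 1)))) ∨ (k < (n / 2 + 1) ∧ cB = min (k + n - (n / 2 + 1)) (n - (k + n - (n / 2 + 1))))))
    (hB' : (((n / 2 + 1) ≤ k' ∧ (2 * (k' - (n / 2 + 1)) < n ∧ cB' = k' - (n / 2 + 1) ∨ n ≤ 2 * (k' - (n / 2 + 1)) ∧ cB' = n - (k' - (n / 2 + 1)) - 1)) ∨ (k' < (n / 2 + 1) ∧ (2 * (k' + n - (n / 2 + 1)) < n ∧ cB' = k' + n - (n / 2 + 1) ∨ n ≤ 2 * (k' + n - (n / 2 + 1)) ∧ cB' = n - (k' + n - (n / 2 + 1)) - 1))))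
    (hC : ((n ≤ k ∧ cC = min (k - n) (n - (k - n))) ∨ (k < n ∧ cC = min (k + n - n) (n - (k + n - n)))))
    (hC' : ((n ≤ k' ∧ (2 * (k' - n) < n ∧ cC' = k' - n ∨ n ≤ 2 * (k' - n) ∧ cC' = n - (k' - n) - 1)) ∨ (k' < n ∧ (2 * (k' + n - n) < n ∧ cC' = k' + n - n ∨ n ≤ 2 * (k' + n - n) ∧ cC' = n - (k' + n - n) - 1))))
    (eA : cA = cA' + 3) (eB : cB = cB' + 3) (eC : cC = cC' + 3) : False := by
  omega

end GammaResolve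



set_option maxHeartbeats 1000000 in
theorem gamma_resolving_p_set (n : ℕ) (hn : 6 ≤ n) :
    IsResolving (Gamma n)
      {HCLVertex.p (2 : ZMod n), HCLVertex.p ((n / 2 + 1 : ℕ) : ZMod n),
        HCLVertex.p ((n : ℕ) : ZMod n)} := by
  have : NeZero n := ⟨by omega⟩
  intro u v huv
  by_contra hcon
  push_neg at hcon
  have hw2 : (2 : ℕ) ≤ n := by omega
  have hwm : n / 2 + 1 ≤ n := by omega
  have hn2 : 2 ≤ n := by omega
  have c2 : (2 : ZMod n) = ((2 : ℕ) : ZMod n) := by norm_cast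
  have e1 := hcon _ (Set.mem_insert _ _)
  have e2 := hcon _ (Set.mem_insert_of_mem _ (Set.mem_insert _ _))
  have e3 := hcon _ (Set.mem_insert_of_mem _ (Set.mem_insert_of_mem _ rfl))
  rw [c2] at e1
  simp only [GammaResolve.dist_eq hn2] at e1 e2 e3
  cases u with
  | p t =>
    cases v with
    | p t' =>
      simp only [GammaResolve.D] at e1 e2 e3
      have hne : t.val ≠ t'.val := fun hh => huv (congrArg _ (ZMod.val_injective n hh))
      exact GammaResolve.lemCC0 n t.val t'.val _ _ _ _ hn (ZMod.val_lt t) (ZMod.val_lt t')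
        hne
        (GammaResolve.cz_char 2 hw2 t) (GammaResolve.cz_char 2 hw2 t')
        (GammaResolve.cz_char n le_rfl t) (GammaResolve.cz_char n le_rfl t')
        (by omega) (by omega)
    | q t' =>
      simp only [GammaResolve.D] at e1 e2 e3
      exact GammaResolve.lemCC1 n t.val t'.val _ _ _ _ _ _ hn (ZMod.val_lt t) (ZMod.val_lt t')
        (GammaResolve.cz_char 2 hw2 t) (GammaResolve.cz_char 2 hw2 t')
        (GammaResolve.cz_char (n / 2 + 1) hwm t) (GammaResolve.cz_char (n / 2 + 1) hwm t')
        (GammaResolve.cz_char n le_rfl t) (GammaResolve.cz_char n le_rfl t')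
        (by omega) (by omega) (by omega)
    | r t' =>
      simp only [GammaResolve.D] at e1 e2 e3
      exact GammaResolve.lemCC2 n t.val t'.val _ _ _ _ _ _ hn (ZMod.val_lt t) (ZMod.val_lt t')
        (GammaResolve.cz_char 2 hw2 t) (GammaResolve.cz_char 2 hw2 t')
        (GammaResolve.cz_char (n / 2 + 1) hwm t) (GammaResolve.cz_char (n / 2 + 1) hwm t')
        (GammaResolve.cz_char n le_rfl t) (GammaResolve.cz_char n le_rfl t')
        (by omega) (by omega) (by omega)
    | s t' =>
      simp only [GammaResolve.D, GammaResolve.cz_min_succ] at e1 e2 e3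
      exact GammaResolve.lemCE3 n t.val t'.val _ _ _ _ _ _ hn (ZMod.val_lt t) (ZMod.val_lt t')
        (GammaResolve.cz_char 2 hw2 t) (GammaResolve.ez_char 2 hw2 t')
        (GammaResolve.cz_char (n / 2 + 1) hwm t) (GammaResolve.ez_char (n / 2 + 1) hwm t')
        (GammaResolve.cz_char n le_rfl t) (GammaResolve.ez_char n le_rfl t')
        (by omega) (by omega) (by omega)
  | q t =>
    cases v with
    | p t' =>
      simp only [GammaResolve.D] at e1 e2 e3
      exact GammaResolve.lemCC1 n t'.val t.val _ _ _ _ _ _ hn (ZMod.val_lt t') (ZMod.val_lt t)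
        (GammaResolve.cz_char 2 hw2 t') (GammaResolve.cz_char 2 hw2 t)
        (GammaResolve.cz_char (n / 2 + 1) hwm t') (GammaResolve.cz_char (n / 2 + 1) hwm t)
        (GammaResolve.cz_char n le_rfl t') (GammaResolve.cz_char n le_rfl t)
        (by omega) (by omega) (by omega)
    | q t' =>
      simp only [GammaResolve.D] at e1 e2 e3
      have hne : t.val ≠ t'.val := fun hh => huv (congrArg _ (ZMod.val_injective n hh))
      exact GammaResolve.lemCC0 n t.val t'.val _ _ _ _ hn (ZMod.val_lt t) (ZMod.val_lt t')
        hne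
        (GammaResolve.cz_char 2 hw2 t) (GammaResolve.cz_char 2 hw2 t')
        (GammaResolve.cz_char n le_rfl t) (GammaResolve.cz_char n le_rfl t')
        (by omega) (by omega)
    | r t' =>
      simp only [GammaResolve.D] at e1 e2 e3
      exact GammaResolve.lemCC1 n t.val t'.val _ _ _ _ _ _ hn (ZMod.val_lt t) (ZMod.val_lt t')
        (GammaResolve.cz_char 2 hw2 t) (GammaResolve.cz_char 2 hw2 t')
        (GammaResolve.cz_char (n / 2 + 1) hwm t) (GammaResolve.cz_char (n / 2 + 1) hwm t')
        (GammaResolve.cz_char n le_rfl t) (GammaResolve.cz_char n le_rfl t')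
        (by omega) (by omega) (by omega)
    | s t' =>
      simp only [GammaResolve.D, GammaResolve.cz_min_succ] at e1 e2 e3
      exact GammaResolve.lemCE2 n t.val t'.val _ _ _ _ _ _ hn (ZMod.val_lt t) (ZMod.val_lt t')
        (GammaResolve.cz_char 2 hw2 t) (GammaResolve.ez_char 2 hw2 t')
        (GammaResolve.cz_char (n / 2 + 1) hwm t) (GammaResolve.ez_char (n / 2 + 1) hwm t')
        (GammaResolve.cz_char n le_rfl t) (GammaResolve.ez_char n le_rfl t')
        (by omega) (by omega) (by omega)
  | r t =>
    cases v with
    | p t' =>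
      simp only [GammaResolve.D] at e1 e2 e3
      exact GammaResolve.lemCC2 n t'.val t.val _ _ _ _ _ _ hn (ZMod.val_lt t') (ZMod.val_lt t)
        (GammaResolve.cz_char 2 hw2 t') (GammaResolve.cz_char 2 hw2 t)
        (GammaResolve.cz_char (n / 2 + 1) hwm t') (GammaResolve.cz_char (n / 2 + 1) hwm t)
        (GammaResolve.cz_char n le_rfl t') (GammaResolve.cz_char n le_rfl t)
        (by omega) (by omega) (by omega)
    | q t' =>
      simp only [GammaResolve.D] at e1 e2 e3
      exact GammaResolve.lemCC1 n t'.val t.val _ _ _ _ _ _ hn (ZMod.val_lt t') (ZMod.val_lt t)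
        (GammaResolve.cz_char 2 hw2 t') (GammaResolve.cz_char 2 hw2 t)
        (GammaResolve.cz_char (n / 2 + 1) hwm t') (GammaResolve.cz_char (n / 2 + 1) hwm t)
        (GammaResolve.cz_char n le_rfl t') (GammaResolve.cz_char n le_rfl t)
        (by omega) (by omega) (by omega)
    | r t' =>
      simp only [GammaResolve.D] at e1 e2 e3
      have hne : t.val ≠ t'.val := fun hh => huv (congrArg _ (ZMod.val_injective n hh))
      exact GammaResolve.lemCC0 n t.val t'.val _ _ _ _ hn (ZMod.val_lt t) (ZMod.val_lt t')
        hne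
        (GammaResolve.cz_char 2 hw2 t) (GammaResolve.cz_char 2 hw2 t')
        (GammaResolve.cz_char n le_rfl t) (GammaResolve.cz_char n le_rfl t')
        (by omega) (by omega)
    | s t' =>
      simp only [GammaResolve.D, GammaResolve.cz_min_succ] at e1 e2 e3
      exact GammaResolve.lemCE1 n t.val t'.val _ _ _ _ _ _ hn (ZMod.val_lt t) (ZMod.val_lt t')
        (GammaResolve.cz_char 2 hw2 t) (GammaResolve.ez_char 2 hw2 t')
        (GammaResolve.cz_char (n / 2 + 1) hwm t) (GammaResolve.ez_char (n / 2 + 1) hwm t')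
        (GammaResolve.cz_char n le_rfl t) (GammaResolve.ez_char n le_rfl t')
        (by omega) (by omega) (by omega)
  | s t =>
    cases v with
    | p t' =>
      simp only [GammaResolve.D, GammaResolve.cz_min_succ] at e1 e2 e3
      exact GammaResolve.lemCE3 n t'.val t.val _ _ _ _ _ _ hn (ZMod.val_lt t') (ZMod.val_lt t)
        (GammaResolve.cz_char 2 hw2 t') (GammaResolve.ez_char 2 hw2 t)
        (GammaResolve.cz_char (n / 2 + 1) hwm t') (GammaResolve.ez_char (n / 2 + 1) hwm t)
        (GammaResolve.cz_char n le_rfl t') (GammaResolve.ez_char n le_rfl t)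
        (by omega) (by omega) (by omega)
    | q t' =>
      simp only [GammaResolve.D, GammaResolve.cz_min_succ] at e1 e2 e3
      exact GammaResolve.lemCE2 n t'.val t.val _ _ _ _ _ _ hn (ZMod.val_lt t') (ZMod.val_lt t)
        (GammaResolve.cz_char 2 hw2 t') (GammaResolve.ez_char 2 hw2 t)
        (GammaResolve.cz_char (n / 2 + 1) hwm t') (GammaResolve.ez_char (n / 2 + 1) hwm t)
        (GammaResolve.cz_char n le_rfl t') (GammaResolve.ez_char n le_rfl t)
        (by omega) (by omega) (by omega)
    | r t' =>
      simp only [GammaResolve.D, GammaResolve.cz_min_succ] at e1 e2 e3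
      exact GammaResolve.lemCE1 n t'.val t.val _ _ _ _ _ _ hn (ZMod.val_lt t') (ZMod.val_lt t)
        (GammaResolve.cz_char 2 hw2 t') (GammaResolve.ez_char 2 hw2 t)
        (GammaResolve.cz_char (n / 2 + 1) hwm t') (GammaResolve.ez_char (n / 2 + 1) hwm t)
        (GammaResolve.cz_char n le_rfl t') (GammaResolve.ez_char n le_rfl t)
        (by omega) (by omega) (by omega)
    | s t' =>
      simp only [GammaResolve.D, GammaResolve.cz_min_succ] at e1 e2 e3
      have hne : t.val ≠ t'.val := fun hh => huv (congrArg _ (ZMod.val_injective n hh))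
      exact GammaResolve.lemEE0 n t.val t'.val _ _ _ _ hn (ZMod.val_lt t) (ZMod.val_lt t')
        hne
        (GammaResolve.ez_char 2 hw2 t) (GammaResolve.ez_char 2 hw2 t')
        (GammaResolve.ez_char n le_rfl t) (GammaResolve.ez_char n le_rfl t')
        (by omega) (by omega)
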